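/- Fix n distinct points λ = ((s₁,p₁),…,(sₙ,pₙ)) in ℂ² with each |s_i| ≤ 2. The set 𝒦_λ of n×n positive definite matrices k with k(i,i) = 1 for all i such that ((4 − s_i·conj(s_j))·k(i,j)), ((1 − p_i·conj(p_j))·k(i,j)) and (((2 − αs_i)·conj(2 − αs_j) − (2αp_i − s_i)·conj(2αp_j − s_j))·k(i,j)) are positive semidefinite for all α ∈ 𝔻̄, is a compact subset of the n×n complex matrices. -/

import Mathlib

open scoped ComplexOrder

open Matrix in
private lemma isClosed_nonneg_complex' : IsClosed {z : ℂ | 0 ≤ z} := by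
  have : {z : ℂ | 0 ≤ z} = Complex.re ⁻¹' Set.Ici 0 ∩ Complex.im ⁻¹' {0} := by
    ext z; simp [Complex.le_def, eq_comm]
  rw [this]
  exact (isClosed_Ici.preimage Complex.continuous_re).inter
    (isClosed_singleton.preimage Complex.continuous_im)

open Matrix in
private lemma isClosed_posSemidef' {n : ℕ} :
    IsClosed {M : Matrix (Fin n) (Fin n) ℂ | M.PosSemidef} := by
  have h : {M : Matrix (Fin n) (Fin n) ℂ | M.PosSemidef} =
      {M : Matrix (Fin n) (Fin n) ℂ | Mᴴ - M = 0} ∩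
      ⋂ x : Fin n → ℂ, {M : Matrix (Fin n) (Fin n) ℂ | 0 ≤ star x ⬝ᵥ M *ᵥ x} := by
    ext M
    simp [Matrix.posSemidef_iff_dotProduct_mulVec, Matrix.IsHermitian, sub_eq_zero, Set.mem_iInter]
  rw [h]
  refine IsClosed.inter ?_ (isClosed_iInter fun x => ?_)
  · exact isClosed_eq (continuous_id.matrix_conjTranspose.sub continuous_id) continuous_const
  · exact isClosed_nonneg_complex'.preimage
      (continuous_const.dotProduct (continuous_id.matrix_mulVec continuous_const))

open Matrix in
private lemma isClosed_entrywise_psd {n : ℕ} (c : Fin n → Fin n → ℂ) :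
    IsClosed {k : Matrix (Fin n) (Fin n) ℂ |
      (Matrix.of fun i j => c i j * k i j).PosSemidef} := by
  have hcont : Continuous fun k : Matrix (Fin n) (Fin n) ℂ =>
      (Matrix.of fun i j => c i j * k i j : Matrix (Fin n) (Fin n) ℂ) :=
    continuous_matrix fun i j => continuous_const.mul ((continuous_id).matrix_elem i j)
  exact isClosed_posSemidef'.preimage hcont

open Matrix in
private lemma isCompact_entry_ball {n : ℕ} :
    IsCompact {k : Matrix (Fin n) (Fin n) ℂ | ∀ i j, ‖k i j‖ ≤ 1} := by
  have heq : {k : Matrix (Fin n) (Fin n) ℂ | ∀ i j, ‖k i j‖ ≤ 1} =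
      Set.univ.pi (fun _ : Fin n => Set.univ.pi fun _ : Fin n => Metric.closedBall (0:ℂ) 1) := by
    ext k
    refine ⟨fun h i _ j _ => ?_, fun h i j => ?_⟩
    · simpa [Metric.mem_closedBall, dist_zero_right] using h i j
    · simpa [Metric.mem_closedBall, dist_zero_right] using h i (Set.mem_univ i) j (Set.mem_univ j)
  rw [heq]
  exact isCompact_univ_pi fun i => isCompact_univ_pi fun j => isCompact_closedBall 0 1

open Matrix in
private lemma entry_bound' {n : ℕ} {k : Matrix (Fin n) (Fin n) ℂ} (hk : k.PosSemidef)
    (hd : ∀ i, k i i = 1) (i j : Fin n) : ‖k i j‖ ≤ 1 := by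
  obtain ⟨A, rfl⟩ : ∃ A : Matrix (Fin n) (Fin n) ℂ, k = Aᴴ * A := by
    open scoped MatrixOrder in
    obtain ⟨X, hX, -, rfl⟩ := CFC.exists_sqrt_of_isSelfAdjoint_of_quasispectrumRestricts
      hk.isHermitian (QuasispectrumRestricts.nnreal_of_nonneg hk.nonneg)
    exact ⟨X, by nth_rewrite 1 [← hX.star_eq]; rfl⟩
  set u : Fin n → EuclideanSpace ℂ (Fin n) := fun i => WithLp.toLp 2 (fun l => A l i) with hu
  have hentry : ∀ a b, (Aᴴ * A) a b = inner ℂ (u a) (u b) := by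
    intro a b
    simp [Matrix.mul_apply, PiLp.inner_apply, hu, Matrix.conjTranspose_apply]
    exact Finset.sum_congr rfl fun _ _ => mul_comm _ _
  have hnorm : ∀ a, ‖u a‖ = 1 := by
    intro a
    have h1 : (inner ℂ (u a) (u a) : ℂ) = 1 := by rw [← hentry]; exact hd a
    have h3 : (‖u a‖ : ℝ)^2 = 1 := by
      rw [← inner_self_eq_norm_sq (𝕜 := ℂ), h1]; simp
    nlinarith [norm_nonneg (u a)]
  calc ‖(Aᴴ * A) i j‖ = ‖(inner ℂ (u i) (u j) : ℂ)‖ := by rw [hentry]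
    _ ≤ ‖u i‖ * ‖u j‖ := norm_inner_le_norm _ _
    _ = 1 := by rw [hnorm, hnorm, mul_one]

open Matrix in
private lemma ker_mul' {n : ℕ} {k : Matrix (Fin n) (Fin n) ℂ} (hk : k.PosSemidef)
    {c : ℂ} {s : Fin n → ℂ}
    (hM : (Matrix.of fun i j => (c - s i * (starRingEnd ℂ) (s j)) * k i j).PosSemidef)
    {x : Fin n → ℂ} (hx : k *ᵥ x = 0) :
    k *ᵥ (fun m => (starRingEnd ℂ) (s m) * x m) = 0 := by
  set y : Fin n → ℂ := fun m => (starRingEnd ℂ) (s m) * x m with hy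
  have key : star x ⬝ᵥ ((Matrix.of fun i j => (c - s i * (starRingEnd ℂ) (s j)) * k i j) *ᵥ x)
      = c * (star x ⬝ᵥ k *ᵥ x) - star y ⬝ᵥ k *ᵥ y := by
    simp only [dotProduct, Matrix.mulVec, Matrix.of_apply, Pi.star_apply, hy,
      Finset.mul_sum, ← Finset.sum_sub_distrib]
    refine Finset.sum_congr rfl fun i _ => ?_
    refine Finset.sum_congr rfl fun j _ => ?_
    simp only [starRingEnd_apply, star_mul', star_star]
    ring
  have h0 : star x ⬝ᵥ k *ᵥ x = 0 := by rw [hx, dotProduct_zero]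
  have h1 : (0:ℂ) ≤ -(star y ⬝ᵥ k *ᵥ y) := by
    have := hM.dotProduct_mulVec_nonneg x
    rw [key, h0, mul_zero, zero_sub] at this
    exact this
  have h2 : (0:ℂ) ≤ star y ⬝ᵥ k *ᵥ y := hk.dotProduct_mulVec_nonneg y
  have h3 : star y ⬝ᵥ k *ᵥ y = 0 := le_antisymm (neg_nonneg.mp h1) h2
  exact (hk.dotProduct_mulVec_zero_iff y).mp h3

open Matrix in
private lemma posDef_of_conds {n : ℕ} (lam : Fin n → ℂ × ℂ) (hlam : Function.Injective lam)
    {k : Matrix (Fin n) (Fin n) ℂ} (hk : k.PosSemidef) (hd : ∀ i, k i i = 1)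
    (h1 : (Matrix.of fun i j =>
        (4 - (lam i).1 * (starRingEnd ℂ) ((lam j).1)) * k i j).PosSemidef)
    (h2 : (Matrix.of fun i j =>
        (1 - (lam i).2 * (starRingEnd ℂ) ((lam j).2)) * k i j).PosSemidef) :
    k.PosDef := by
  refine Matrix.PosDef.of_dotProduct_mulVec_pos hk.1 fun x hx => ?_
  refine (hk.dotProduct_mulVec_nonneg x).lt_of_ne' fun h => ?_
  exfalso
  have hker : k *ᵥ x = 0 := (hk.dotProduct_mulVec_zero_iff x).mp h
  obtain ⟨i, hi⟩ : ∃ i, x i ≠ 0 := by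
    by_contra h'; push_neg at h'; exact hx (funext h')
  set g : Fin n → Fin n → ℂ := fun j m =>
    if (lam i).1 = (lam j).1 then (starRingEnd ℂ) ((lam m).2) - (starRingEnd ℂ) ((lam j).2)
    else (starRingEnd ℂ) ((lam m).1) - (starRingEnd ℂ) ((lam j).1) with hg
  have hstep : ∀ (j : Fin n) (z : Fin n → ℂ), k *ᵥ z = 0 →
      k *ᵥ (fun m => g j m * z m) = 0 := by
    intro j z hz
    have hz1 : k *ᵥ (fun m => (starRingEnd ℂ) ((lam m).1) * z m) = 0 :=
      ker_mul' hk h1 hz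
    have hz2 : k *ᵥ (fun m => (starRingEnd ℂ) ((lam m).2) * z m) = 0 :=
      ker_mul' hk h2 hz
    by_cases hc : (lam i).1 = (lam j).1
    · have : (fun m => g j m * z m) =
          (fun m => (starRingEnd ℂ) ((lam m).2) * z m) - ((starRingEnd ℂ) ((lam j).2)) • z := by
        funext m; simp [hg, hc]; ring
      rw [this, Matrix.mulVec_sub, Matrix.mulVec_smul, hz2, hz, smul_zero, sub_zero]
    · have : (fun m => g j m * z m) =
          (fun m => (starRingEnd ℂ) ((lam m).1) * z m) - ((starRingEnd ℂ) ((lam j).1)) • z := by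
        funext m; simp [hg, hc]; ring
      rw [this, Matrix.mulVec_sub, Matrix.mulVec_smul, hz1, hz, smul_zero, sub_zero]
  have hprod : ∀ (t : Finset (Fin n)),
      k *ᵥ (fun m => (∏ j ∈ t, g j m) * x m) = 0 := by
    intro t
    induction t using Finset.induction_on with
    | empty => simpa using hker
    | @insert a t ha ih =>
      have := hstep a _ ih
      convert this using 2
      funext m
      rw [Finset.prod_insert ha]
      ring
  set y : Fin n → ℂ := fun m => (∏ j ∈ Finset.univ.erase i, g j m) * x m with hyd
  have hy : k *ᵥ y = 0 := hprod _
  have hy0 : ∀ m, m ≠ i → y m = 0 := by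
    intro m hm
    have hmem : m ∈ Finset.univ.erase i := Finset.mem_erase.mpr ⟨hm, Finset.mem_univ m⟩
    have : (∏ j ∈ Finset.univ.erase i, g j m) = 0 :=
      Finset.prod_eq_zero hmem (by by_cases hc : (lam i).1 = (lam m).1 <;> simp [hg, hc])
    simp [hyd, this]
  have hyi : y i ≠ 0 := by
    refine mul_ne_zero (Finset.prod_ne_zero_iff.mpr fun j hj => ?_) hi
    have hji : j ≠ i := (Finset.mem_erase.mp hj).1
    have hne : lam i ≠ lam j := fun hh => hji (hlam hh).symm
    by_cases hc : (lam i).1 = (lam j).1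
    · have hne2 : (lam i).2 ≠ (lam j).2 := by
        intro hh; exact hne (Prod.ext hc hh)
      simp only [hg, hc, if_pos rfl]
      exact sub_ne_zero.mpr fun hh => hne2 ((starRingEnd ℂ).injective hh)
    · simp only [hg, if_neg hc]
      exact sub_ne_zero.mpr fun hh => hc ((starRingEnd ℂ).injective hh)
  have hcontra : (k *ᵥ y) i = y i := by
    rw [Matrix.mulVec]
    rw [show (fun j => k i j) ⬝ᵥ y = ∑ m, k i m * y m from rfl]
    rw [Finset.sum_eq_single i (fun m _ hm => by rw [hy0 m hm, mul_zero]) (by simp)]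
    rw [hd i, one_mul]
  rw [hy] at hcontra
  exact hyi hcontra.symm

theorem stmt10 (n : ℕ) (lam : Fin n → ℂ × ℂ) (hlam : Function.Injective lam)
    (hbound : ∀ i, ‖(lam i).1‖ ≤ 2) :
    IsCompact {k : Matrix (Fin n) (Fin n) ℂ |
      k.PosDef ∧ (∀ i, k i i = 1) ∧
      (Matrix.of fun i j =>
        (4 - (lam i).1 * (starRingEnd ℂ) ((lam j).1)) * k i j).PosSemidef ∧
      (Matrix.of fun i j =>
        (1 - (lam i).2 * (starRingEnd ℂ) ((lam j).2)) * k i j).PosSemidef ∧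
      ∀ α : ℂ, ‖α‖ ≤ 1 →
        (Matrix.of fun i j =>
          ((2 - α * (lam i).1) * (starRingEnd ℂ) (2 - α * (lam j).1)
            - (2 * α * (lam i).2 - (lam i).1) *
              (starRingEnd ℂ) (2 * α * (lam j).2 - (lam j).1)) * k i j).PosSemidef} := by
  have hset : {k : Matrix (Fin n) (Fin n) ℂ |
      k.PosDef ∧ (∀ i, k i i = 1) ∧
      (Matrix.of fun i j =>
        (4 - (lam i).1 * (starRingEnd ℂ) ((lam j).1)) * k i j).PosSemidef ∧
      (Matrix.of fun i j =>
        (1 - (lam i).2 * (starRingEnd ℂ) ((lam j).2)) * k i j).PosSemidef ∧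
      ∀ α : ℂ, ‖α‖ ≤ 1 →
        (Matrix.of fun i j =>
          ((2 - α * (lam i).1) * (starRingEnd ℂ) (2 - α * (lam j).1)
            - (2 * α * (lam i).2 - (lam i).1) *
              (starRingEnd ℂ) (2 * α * (lam j).2 - (lam j).1)) * k i j).PosSemidef} =
      {k : Matrix (Fin n) (Fin n) ℂ |
      k.PosSemidef ∧ (∀ i, k i i = 1) ∧
      (Matrix.of fun i j =>
        (4 - (lam i).1 * (starRingEnd ℂ) ((lam j).1)) * k i j).PosSemidef ∧
      (Matrix.of fun i j =>
        (1 - (lam i).2 * (starRingEnd ℂ) ((lam j).2)) * k i j).PosSemidef ∧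
      ∀ α : ℂ, ‖α‖ ≤ 1 →
        (Matrix.of fun i j =>
          ((2 - α * (lam i).1) * (starRingEnd ℂ) (2 - α * (lam j).1)
            - (2 * α * (lam i).2 - (lam i).1) *
              (starRingEnd ℂ) (2 * α * (lam j).2 - (lam j).1)) * k i j).PosSemidef} := by
    ext k
    simp only [Set.mem_setOf_eq]
    constructor
    · rintro ⟨h1, h2, h3, h4, h5⟩
      exact ⟨h1.posSemidef, h2, h3, h4, h5⟩
    · rintro ⟨h1, h2, h3, h4, h5⟩
      exact ⟨posDef_of_conds lam hlam h1 h2 h3 h4, h2, h3, h4, h5⟩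
  rw [hset]
  refine IsCompact.of_isClosed_subset isCompact_entry_ball ?_ ?_
  · simp only [Set.setOf_and]
    refine isClosed_posSemidef'.inter (IsClosed.inter ?_ (IsClosed.inter
      (isClosed_entrywise_psd _) (IsClosed.inter (isClosed_entrywise_psd _) ?_)))
    · rw [Set.setOf_forall]
      exact isClosed_iInter fun i =>
        isClosed_eq (continuous_id.matrix_elem i i) continuous_const
    · rw [Set.setOf_forall]
      refine isClosed_iInter fun α => ?_
      by_cases hα : ‖α‖ ≤ 1
      · have : {k : Matrix (Fin n) (Fin n) ℂ | ‖α‖ ≤ 1 →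
            (Matrix.of fun i j =>
              ((2 - α * (lam i).1) * (starRingEnd ℂ) (2 - α * (lam j).1)
                - (2 * α * (lam i).2 - (lam i).1) *
                  (starRingEnd ℂ) (2 * α * (lam j).2 - (lam j).1)) * k i j).PosSemidef} =
            {k : Matrix (Fin n) (Fin n) ℂ |
            (Matrix.of fun i j =>
              ((2 - α * (lam i).1) * (starRingEnd ℂ) (2 - α * (lam j).1)
                - (2 * α * (lam i).2 - (lam i).1) *
                  (starRingEnd ℂ) (2 * α * (lam j).2 - (lam j).1)) * k i j).PosSemidef} := by
          ext k; exact ⟨fun h => h hα, fun h _ => h⟩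
        rw [this]
        exact isClosed_entrywise_psd _
      · have : {k : Matrix (Fin n) (Fin n) ℂ | ‖α‖ ≤ 1 →
            (Matrix.of fun i j =>
              ((2 - α * (lam i).1) * (starRingEnd ℂ) (2 - α * (lam j).1)
                - (2 * α * (lam i).2 - (lam i).1) *
                  (starRingEnd ℂ) (2 * α * (lam j).2 - (lam j).1)) * k i j).PosSemidef} =
            Set.univ := by
          ext k
          simp only [Set.mem_univ, iff_true, Set.mem_setOf_eq]
          exact fun h => absurd h hα
        rw [this]
        exact isClosed_univ
  · rintro k ⟨h1, h2, -⟩ 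
    exact fun i j => entry_bound' h1 h2 i j
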